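/- arXiv:1511.00580 — 5 statements merged into one kernel-verified Lean document; each statement's English description precedes it below -/
import Mathlib

section
/- Let γ = [[a,b],[c,d]] ∈ SL₂(ℂ) with complex entries written in polar form. If Im(a·conj(c)) = 0, Im(a·conj(d) + b·conj(c)) = 0, and Im(b·conj(d)) = 0, and ad - bc = 1, then either all of a, b, c, d are real, or all of a, b, c, d are purely imaginary. -/
open Complex

theorem stmt_0 (a b c d : ℂ)
    (h1 : (a * (starRingEnd ℂ) c).im = 0)
    (h2 : (a * (starRingEnd ℂ) d + b * (starRingEnd ℂ) c).im = 0)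
    (h3 : (b * (starRingEnd ℂ) d).im = 0)
    (hdet : a * d - b * c = 1) :
    (a.im = 0 ∧ b.im = 0 ∧ c.im = 0 ∧ d.im = 0) ∨
    (a.re = 0 ∧ b.re = 0 ∧ c.re = 0 ∧ d.re = 0) := by
  simp only [Complex.ext_iff, mul_im, mul_re, add_im, sub_im, sub_re, one_re, one_im,
    conj_re, conj_im] at h1 h2 h3 hdet
  obtain ⟨hr, hi⟩ := hdet
  -- real-entry notation
  set A := a.re; set B := b.re; set C := c.re; set D := d.re
  set A2 := a.im; set B2 := b.im; set C2 := c.im; set D2 := d.im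
  -- derived relations
  have e3 : A2 * D - B * C2 = 0 := by linarith
  have e4 : A * D2 - B2 * C = 0 := by linarith
  have e1 : A2 * C - A * C2 = 0 := by linarith
  have e2 : B2 * D - B * D2 = 0 := by linarith
  have hdet1 : (A * D - B * C) - (A2 * D2 - B2 * C2) = 1 := by linarith
  by_cases h : A * D - B * C = 0
  · -- then A2*D2 - B2*C2 = -1 ≠ 0, real parts vanish
    have h2d : A2 * D2 - B2 * C2 = -1 := by linarith
    right
    have ha : A * (A2 * D2 - B2 * C2) = 0 := by linear_combination A2*e4 + B2*e1
    have hb : B * (A2 * D2 - B2 * C2) = 0 := by linear_combination B2*e3 - A2*e2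
    have hc : C * (A2 * D2 - B2 * C2) = 0 := by linear_combination D2*e1 + C2*e4
    have hd : D * (A2 * D2 - B2 * C2) = 0 := by linear_combination D2*e3 - C2*e2
    rw [h2d] at ha hb hc hd
    exact ⟨by linarith, by linarith, by linarith, by linarith⟩
  · left
    have ha : A2 * (A * D - B * C) = 0 := by linear_combination A*e3 - B*e1
    have hb : B2 * (A * D - B * C) = 0 := by linear_combination A*e2 + B*e4
    have hc : C2 * (A * D - B * C) = 0 := by linear_combination C*e3 - D*e1
    have hd : D2 * (A * D - B * C) = 0 := by linear_combination D*e4 + C*e2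
    exact ⟨by rcases mul_eq_zero.1 ha with h'|h'; exact h'; exact absurd h' h,
      by rcases mul_eq_zero.1 hb with h'|h'; exact h'; exact absurd h' h,
      by rcases mul_eq_zero.1 hc with h'|h'; exact h'; exact absurd h' h,
      by rcases mul_eq_zero.1 hd with h'|h'; exact h'; exact absurd h' h⟩
end

section
/- Let λ ≥ 0 and let ξ : [0, π/2) → ℝ solve the ODE cos²v · ξ''(v) + sin v cos v · ξ'(v) + λ ξ(v) = 0 with ξ(0) = 1 and ξ'(0) = 0. Then |ξ(v)| ≤ 1 for all v ∈ [0, π/2). -/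
open Real Set

/-- If `ξ` solves `cos²v ξ'' + sin v cos v ξ' + λ ξ = 0` on `[0, π/2)` with `ξ(0) = 1`,
`ξ'(0) = 0`, and `λ ≥ 0`, then `|ξ(v)| ≤ 1` on `[0, π/2)`. -/
theorem stmt_3 (lam : ℝ) (hlam : 0 ≤ lam) (ξ ξ' ξ'' : ℝ → ℝ)
    (hd1 : ∀ v ∈ Ico 0 (π/2), HasDerivAt ξ (ξ' v) v)
    (hd2 : ∀ v ∈ Ico 0 (π/2), HasDerivAt ξ' (ξ'' v) v)
    (hcont : ContinuousOn ξ'' (Ico 0 (π/2)))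
    (hode : ∀ v ∈ Ico 0 (π/2),
      cos v ^ 2 * ξ'' v + sin v * cos v * ξ' v + lam * ξ v = 0)
    (h0 : ξ 0 = 1) (h0' : ξ' 0 = 0) :
    ∀ v ∈ Ico 0 (π/2), |ξ v| ≤ 1 := by
  have hpi : (0:ℝ) < π/2 := by positivity
  have h0mem : (0:ℝ) ∈ Ico 0 (π/2) := ⟨le_refl 0, hpi⟩
  have hcosv : ∀ v ∈ Ico (0:ℝ) (π/2), 0 < cos v := fun v hv =>
    Real.cos_pos_of_mem_Ioo ⟨by linarith [hv.1, hpi], hv.2⟩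
  have hsinv : ∀ v ∈ Ico (0:ℝ) (π/2), 0 ≤ sin v := fun v hv =>
    Real.sin_nonneg_of_nonneg_of_le_pi hv.1 (by linarith [hv.2, Real.pi_pos])
  set E : ℝ → ℝ := fun v => cos v ^ 2 * ξ' v ^ 2 + lam * ξ v ^ 2 with hEdef
  have hE : ∀ v ∈ Ico (0:ℝ) (π/2),
      HasDerivAt E (-(4 * sin v * cos v * ξ' v ^ 2)) v := by
    intro v hv
    have h1 : HasDerivAt (fun v => cos v ^ 2 * ξ' v ^ 2 + lam * ξ v ^ 2)
        ((2 * cos v ^ 1 * (-sin v)) * ξ' v ^ 2 + cos v ^ 2 * (2 * ξ' v ^ 1 * ξ'' v)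
          + lam * (2 * ξ v ^ 1 * ξ' v)) v := by
      exact (((Real.hasDerivAt_cos v).pow 2).mul ((hd2 v hv).pow 2)).add
        (((hd1 v hv).pow 2).const_mul lam)
    convert h1 using 1
    have := hode v hv
    linear_combination (-2 * ξ' v) * this
  have hconv : Convex ℝ (Ico (0:ℝ) (π/2)) := convex_Ico _ _
  have hint : interior (Ico (0:ℝ) (π/2)) = Ioo 0 (π/2) := interior_Ico
  have hantE : AntitoneOn E (Ico 0 (π/2)) := by
    apply antitoneOn_of_deriv_nonpos hconv
    · exact fun v hv => ((hE v hv).continuousAt).continuousWithinAt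
    · rw [hint]; exact fun v hv => ((hE v (Ioo_subset_Ico_self hv)).differentiableAt.differentiableWithinAt)
    · rw [hint]
      intro v hv
      have hv' := Ioo_subset_Ico_self hv
      rw [(hE v hv').deriv]
      have h4 := mul_nonneg (mul_nonneg (hsinv v hv') (hcosv v hv').le) (sq_nonneg (ξ' v))
      linarith
  have hE0 : E 0 = lam := by simp [hEdef, h0, h0']
  intro v hv
  have hEle : E v ≤ lam := hE0 ▸ hantE h0mem hv hv.1
  rcases hlam.eq_or_lt with h | hpos
  · -- lam = 0 : ξ' ≡ 0, so ξ is constant 1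
    have hxi' : ∀ w ∈ Ico (0:ℝ) (π/2), ξ' w = 0 := by
      intro w hw
      have hEw : E w ≤ 0 := by
        have := hE0 ▸ hantE h0mem hw hw.1
        linarith [this, h]
      have hcw := hcosv w hw
      have : cos w ^ 2 * ξ' w ^ 2 ≤ 0 := by
        simp only [hEdef] at hEw
        nlinarith [sq_nonneg (ξ w)]
      have hc2 : 0 < cos w ^ 2 := pow_pos hcw 2
      have h2 : ξ' w ^ 2 ≤ 0 := by
        have : cos w ^ 2 * ξ' w ^ 2 ≤ cos w ^ 2 * 0 := by linarith
        exact le_of_mul_le_mul_left this hc2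
      have := le_antisymm h2 (sq_nonneg (ξ' w))
      exact pow_eq_zero_iff two_ne_zero |>.mp this
    have hmono : MonotoneOn ξ (Ico 0 (π/2)) := by
      apply monotoneOn_of_deriv_nonneg hconv
      · exact fun w hw => ((hd1 w hw).continuousAt).continuousWithinAt
      · rw [hint]; exact fun w hw => (hd1 w (Ioo_subset_Ico_self hw)).differentiableAt.differentiableWithinAt
      · rw [hint]; intro w hw
        rw [(hd1 w (Ioo_subset_Ico_self hw)).deriv, hxi' w (Ioo_subset_Ico_self hw)]
    have hanti : AntitoneOn ξ (Ico 0 (π/2)) := by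
      apply antitoneOn_of_deriv_nonpos hconv
      · exact fun w hw => ((hd1 w hw).continuousAt).continuousWithinAt
      · rw [hint]; exact fun w hw => (hd1 w (Ioo_subset_Ico_self hw)).differentiableAt.differentiableWithinAt
      · rw [hint]; intro w hw
        rw [(hd1 w (Ioo_subset_Ico_self hw)).deriv, hxi' w (Ioo_subset_Ico_self hw)]
    have h1 : ξ v ≤ ξ 0 := hanti h0mem hv hv.1
    have h2 : ξ 0 ≤ ξ v := hmono h0mem hv hv.1
    rw [h0] at h1 h2
    rw [abs_le]; constructor <;> linarith
  · -- lam > 0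
    have : lam * ξ v ^ 2 ≤ lam := by
      simp only [hEdef] at hEle
      nlinarith [sq_nonneg (cos v * ξ' v)]
    have hsq : ξ v ^ 2 ≤ 1 := by nlinarith
    rw [abs_le]; constructor <;> nlinarith
end

section
/- Let λ ≥ 0 and let ξ : [0, π/2) → ℝ solve cos²v · ξ''(v) + sin v cos v · ξ'(v) + λ ξ(v) = 0 with ξ(0) = 1, ξ'(0) = 0. Then ξ(v) ≥ 1 - ((2+λ)/2)·tan²v for all v ∈ [0, π/2). -/
open Real Set

/-- If `ξ` solves `cos²v ξ'' + sin v cos v ξ' + λ ξ = 0` on `[0, π/2)` with `ξ(0) = 1`,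
`ξ'(0) = 0`, and `λ ≥ 0`, then `|ξ(v)| ≤ 1` on `[0, π/2)`. -/
theorem stmt_4 (lam : ℝ) (hlam : 0 ≤ lam) (ξ ξ' ξ'' : ℝ → ℝ)
    (hd1 : ∀ v ∈ Ico 0 (π/2), HasDerivAt ξ (ξ' v) v)
    (hd2 : ∀ v ∈ Ico 0 (π/2), HasDerivAt ξ' (ξ'' v) v)
    (hcont : ContinuousOn ξ'' (Ico 0 (π/2)))
    (hode : ∀ v ∈ Ico 0 (π/2),
      cos v ^ 2 * ξ'' v + sin v * cos v * ξ' v + lam * ξ v = 0)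
    (h0 : ξ 0 = 1) (h0' : ξ' 0 = 0) :
    ∀ v ∈ Ico 0 (π/2), ξ v ≥ 1 - ((2 + lam) / 2) * tan v ^ 2 := by
  have hπ : (0:ℝ) < π/2 := by positivity
  have h0mem : (0:ℝ) ∈ Ico 0 (π/2) := ⟨le_refl _, hπ⟩
  have hcos : ∀ v ∈ Ico 0 (π/2), 0 < cos v := by
    intro v hv
    exact Real.cos_pos_of_mem_Ioo ⟨by linarith [Real.pi_pos, hv.1], hv.2⟩
  have hsin : ∀ v ∈ Ico 0 (π/2), 0 ≤ sin v := by
    intro v hv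
    exact Real.sin_nonneg_of_nonneg_of_le_pi hv.1 (by linarith [Real.pi_pos, hv.2])
  have hIoo : interior (Ico 0 (π/2)) = Ioo 0 (π/2) := interior_Ico
  have hsub : Ioo 0 (π/2) ⊆ Ico 0 (π/2) := Ioo_subset_Ico_self
  -- Step 1: energy
  set E : ℝ → ℝ := fun v => lam * ξ v ^ 2 + cos v ^ 2 * ξ' v ^ 2 with hEdef
  have hEderiv : ∀ v ∈ Ico 0 (π/2), HasDerivAt E (-(4 * sin v * cos v * ξ' v ^ 2)) v := by
    intro v hv
    have h1 := ((hd1 v hv).pow 2).const_mul lam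
    have h2 := ((Real.hasDerivAt_cos v).pow 2).mul ((hd2 v hv).pow 2)
    have h := h1.add h2
    refine h.congr_deriv ?_
    have ho := hode v hv
    push_cast
    simp only [Pi.pow_apply]
    linear_combination (2 * ξ' v) * ho
  have hEanti : AntitoneOn E (Ico 0 (π/2)) := by
    apply antitoneOn_of_hasDerivWithinAt_nonpos (convex_Ico 0 (π/2))
      (fun x hx => (hEderiv x hx).continuousAt.continuousWithinAt)
      (f' := fun v => -(4 * sin v * cos v * ξ' v ^ 2))
    · intro x hx
      rw [hIoo] at hx
      exact ((hEderiv x (hsub hx)).hasDerivWithinAt)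
    · intro x hx
      rw [hIoo] at hx
      have hmem := hsub hx
      have h1 : 0 ≤ sin x * cos x * ξ' x ^ 2 :=
        mul_nonneg (mul_nonneg (hsin x hmem) (hcos x hmem).le) (sq_nonneg _)
      nlinarith [h1]
  have hE0 : E 0 = lam := by simp [hEdef, h0, h0']
  have hξle : ∀ v ∈ Ico 0 (π/2), lam * ξ v ≤ lam := by
    intro v hv
    have h1 : E v ≤ lam := hE0 ▸ hEanti h0mem hv hv.1
    simp only [hEdef] at h1
    have h2 : (0:ℝ) ≤ cos v ^ 2 * ξ' v ^ 2 := by positivity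
    have h3 := mul_nonneg hlam (sq_nonneg (ξ v - 1))
    nlinarith [h3]
  -- Step 2: F := ξ'/cos + lam * sin/cos³ is monotone, hence nonneg
  set F : ℝ → ℝ := fun v => ξ' v / cos v + lam * (sin v / cos v ^ 3) with hFdef
  have hFderiv : ∀ v ∈ Ico 0 (π/2), HasDerivAt F
      ((lam * (cos v ^ 2 + 3 * sin v ^ 2) - lam * ξ v * cos v) / cos v ^ 4) v := by
    intro v hv
    have hc := hcos v hv
    have hc3 : cos v ^ 3 ≠ 0 := by positivity
    have h1 := (hd2 v hv).div (Real.hasDerivAt_cos v) hc.ne'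
    have h2 := (((Real.hasDerivAt_sin v).div ((Real.hasDerivAt_cos v).pow 3)
      hc3)).const_mul lam
    have h := h1.add h2
    refine h.congr_deriv ?_
    have ho := hode v hv
    have hsc : sin v ^ 2 + cos v ^ 2 = 1 := sin_sq_add_cos_sq v
    push_cast
    simp only [Pi.pow_apply]
    field_simp
    linear_combination (cos v) * ho
  have hFmono : MonotoneOn F (Ico 0 (π/2)) := by
    apply monotoneOn_of_hasDerivWithinAt_nonneg (convex_Ico 0 (π/2))
      (fun x hx => (hFderiv x hx).continuousAt.continuousWithinAt)
      (f' := fun v => (lam * (cos v ^ 2 + 3 * sin v ^ 2) - lam * ξ v * cos v) / cos v ^ 4)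
    · intro x hx
      rw [hIoo] at hx
      exact ((hFderiv x (hsub hx)).hasDerivWithinAt)
    · intro x hx
      rw [hIoo] at hx
      have hmem := hsub hx
      have hc := hcos x hmem
      have hle := hξle x hmem
      have hsc : sin x ^ 2 + cos x ^ 2 = 1 := sin_sq_add_cos_sq x
      have e1 : lam * ξ x * cos x ≤ lam * cos x :=
        mul_le_mul_of_nonneg_right hle hc.le
      have e2 : lam * cos x ≤ lam := mul_le_of_le_one_right hlam (Real.cos_le_one x)
      have e4 : lam * (sin x ^ 2 + cos x ^ 2) = lam := by rw [hsc, mul_one]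
      have e5 := mul_nonneg hlam (sq_nonneg (sin x))
      have hnum : 0 ≤ lam * (cos x ^ 2 + 3 * sin x ^ 2) - lam * ξ x * cos x := by nlinarith
      positivity
  have hF0 : F 0 = 0 := by simp [hFdef, h0']
  have hF : ∀ v ∈ Ico 0 (π/2), ξ' v ≥ -(lam * (sin v / cos v ^ 2)) := by
    intro v hv
    have h1 : (0:ℝ) ≤ F v := hF0 ▸ hFmono h0mem hv hv.1
    have hc := hcos v hv
    simp only [hFdef] at h1
    have h2 : 0 ≤ (ξ' v / cos v + lam * (sin v / cos v ^ 3)) * cos v := mul_nonneg h1 hc.le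
    have h3 : (ξ' v / cos v + lam * (sin v / cos v ^ 3)) * cos v
        = ξ' v + lam * (sin v / cos v ^ 2) := by
      field_simp
    rw [h3] at h2
    linarith
  -- Step 3: H := ξ + lam / cos is monotone
  set H : ℝ → ℝ := fun v => ξ v + lam * (cos v)⁻¹ with hHdef
  have hHderiv : ∀ v ∈ Ico 0 (π/2), HasDerivAt H (ξ' v + lam * (sin v / cos v ^ 2)) v := by
    intro v hv
    have hc := hcos v hv
    have h1 := ((Real.hasDerivAt_cos v).inv hc.ne').const_mul lam
    have h := (hd1 v hv).add h1
    refine h.congr_deriv ?_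
    field_simp
  have hHmono : MonotoneOn H (Ico 0 (π/2)) := by
    apply monotoneOn_of_hasDerivWithinAt_nonneg (convex_Ico 0 (π/2))
      (fun x hx => (hHderiv x hx).continuousAt.continuousWithinAt)
      (f' := fun v => ξ' v + lam * (sin v / cos v ^ 2))
    · intro x hx
      rw [hIoo] at hx
      exact ((hHderiv x (hsub hx)).hasDerivWithinAt)
    · intro x hx
      rw [hIoo] at hx
      have := hF x (hsub hx)
      linarith
  have hH0 : H 0 = 1 + lam := by simp [hHdef, h0]
  -- Final
  intro v hv
  have hHv : 1 + lam ≤ H v := hH0 ▸ hHmono h0mem hv hv.1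
  have hc := hcos v hv
  have hc1 : cos v ≤ 1 := Real.cos_le_one v
  have hsc : sin v ^ 2 + cos v ^ 2 = 1 := sin_sq_add_cos_sq v
  have htan : tan v = sin v / cos v := Real.tan_eq_sin_div_cos v
  simp only [hHdef] at hHv
  rw [ge_iff_le, htan]
  have key : 1 + lam - lam * (cos v)⁻¹ ≥ 1 - ((2 + lam) / 2) * (sin v / cos v) ^ 2 := by
    rw [ge_iff_le, div_pow, ← sub_nonneg]
    have expand : 1 + lam - lam * (cos v)⁻¹ - (1 - (2 + lam) / 2 * (sin v ^ 2 / cos v ^ 2))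
        = (lam * cos v * (cos v - 1) + (2 + lam) / 2 * sin v ^ 2) / cos v ^ 2 := by
      field_simp
      ring
    rw [expand]
    apply div_nonneg _ (by positivity)
    nlinarith [sq_nonneg (1 - cos v), sq_nonneg (sin v)]
  linarith
end

section
/- For λ ≥ 0 with 1 - λ = (s-1)² (s real or complex with s(2-s) = λ), the function ξ(v) = cosh((s-1)·arcsinh(tan v)) · cos v satisfies the ODE cos²v · ξ''(v) + sin v cos v · ξ'(v) + λ ξ(v) = 0 on (-π/2, π/2), with ξ(0) = 1 and ξ'(0) = 0. -/
open Real Set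

/-- For `λ = s(2-s)`, the function `ξ(v) = cos v · cosh((s-1)·arcsinh(tan v))` satisfies
`cos²v ξ'' + sin v cos v ξ' + λ ξ = 0` on `(-π/2, π/2)` with `ξ(0) = 1`, `ξ'(0) = 0`. -/
theorem stmt_5 (s lam : ℂ) (hlam : lam = s * (2 - s))
    (ξ : ℝ → ℂ)
    (hξ : ξ = fun v => (Real.cos v : ℂ) * Complex.cosh ((s - 1) * (Real.arsinh (Real.tan v) : ℂ))) :
    (∀ v ∈ Ioo (-(π/2)) (π/2),
        (Real.cos v : ℂ) ^ 2 * deriv (deriv ξ) v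
          + (Real.sin v : ℂ) * (Real.cos v : ℂ) * deriv ξ v + lam * ξ v = 0)
    ∧ ξ 0 = 1 ∧ deriv ξ 0 = 0 := by
  set a : ℂ := s - 1 with ha
  set u : ℝ → ℝ := fun v => Real.arsinh (Real.tan v) with hu
  set g : ℝ → ℂ := fun v =>
    -(Real.sin v : ℂ) * Complex.cosh (a * (u v : ℂ)) + a * Complex.sinh (a * (u v : ℂ)) with hg
  -- derivative of u on the interval
  have hudiff : ∀ v ∈ Ioo (-(π/2)) (π/2), HasDerivAt u (Real.cos v)⁻¹ v := by
    intro v hv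
    have hc : 0 < Real.cos v := Real.cos_pos_of_mem_Ioo hv
    have h1 : HasDerivAt Real.tan (1 / Real.cos v ^ 2) v := Real.hasDerivAt_tan hc.ne'
    have h2 := (Real.hasDerivAt_arsinh (Real.tan v)).comp v h1
    refine h2.congr_deriv ?_
    symm
    have h3 : (1 + Real.tan v ^ 2) = (Real.cos v ^ 2)⁻¹ := by
      rw [← Real.inv_one_add_tan_sq hc.ne', inv_inv]
    rw [h3, show ((Real.cos v:ℝ) ^ 2)⁻¹ = ((Real.cos v)⁻¹)^2 by rw [inv_pow],
      Real.sqrt_sq (by positivity)]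
    field_simp
  -- derivative of the inner complex function
  have hFdiff : ∀ v ∈ Ioo (-(π/2)) (π/2),
      HasDerivAt (fun v => a * (u v : ℂ)) (a * (Real.cos v : ℂ)⁻¹) v := by
    intro v hv
    have := ((hudiff v hv).ofReal_comp).const_mul a
    simpa using this
  -- first derivative of ξ
  have hξdiff : ∀ v ∈ Ioo (-(π/2)) (π/2), HasDerivAt ξ (g v) v := by
    intro v hv
    have hc : 0 < Real.cos v := Real.cos_pos_of_mem_Ioo hv
    have hcc : (Real.cos v : ℂ) ≠ 0 := by exact_mod_cast hc.ne'
    have hCinv : (Real.cos v : ℂ) * (Real.cos v : ℂ)⁻¹ = 1 := mul_inv_cancel₀ hcc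
    have h1 : HasDerivAt (fun v => (Real.cos v : ℂ)) (-(Real.sin v : ℂ)) v := by
      have := (Real.hasDerivAt_cos v).ofReal_comp
      simpa using this
    have h2 : HasDerivAt (fun v => Complex.cosh (a * (u v : ℂ)))
        (Complex.sinh (a * (u v : ℂ)) * (a * (Real.cos v : ℂ)⁻¹)) v :=
      by exact (Complex.hasDerivAt_cosh (a * (u v : ℂ))).comp v (hFdiff v hv)
    have h3 := h1.mul h2
    rw [hξ, hg]
    refine h3.congr_deriv ?_
    symm
    simp only [hu]
    set C := (Real.cos v : ℂ)
    set S := (Real.sin v : ℂ)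
    set ch := Complex.cosh (a * (Real.arsinh (Real.tan v) : ℂ))
    set sh := Complex.sinh (a * (Real.arsinh (Real.tan v) : ℂ))
    linear_combination (-(a * sh)) * hCinv
  -- second derivative
  have hgdiff : ∀ v ∈ Ioo (-(π/2)) (π/2), HasDerivAt g
      (-(Real.cos v : ℂ) * Complex.cosh (a * (u v : ℂ))
        - (Real.sin v : ℂ) * (Complex.sinh (a * (u v : ℂ)) * (a * (Real.cos v : ℂ)⁻¹))
        + a * (Complex.cosh (a * (u v : ℂ)) * (a * (Real.cos v : ℂ)⁻¹))) v := by
    intro v hv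
    have h1 : HasDerivAt (fun v => -(Real.sin v : ℂ)) (-(Real.cos v : ℂ)) v := by
      have := ((Real.hasDerivAt_sin v).ofReal_comp).neg
      exact this
    have h2 : HasDerivAt (fun v => Complex.cosh (a * (u v : ℂ)))
        (Complex.sinh (a * (u v : ℂ)) * (a * (Real.cos v : ℂ)⁻¹)) v :=
      by exact (Complex.hasDerivAt_cosh (a * (u v : ℂ))).comp v (hFdiff v hv)
    have h3 : HasDerivAt (fun v => Complex.sinh (a * (u v : ℂ)))
        (Complex.cosh (a * (u v : ℂ)) * (a * (Real.cos v : ℂ)⁻¹)) v :=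
      by exact (Complex.hasDerivAt_sinh (a * (u v : ℂ))).comp v (hFdiff v hv)
    have := (h1.mul h2).add (h3.const_mul a)
    refine this.congr_deriv ?_
    symm
    ring
  refine ⟨?_, ?_, ?_⟩
  · intro v hv
    have hc : 0 < Real.cos v := Real.cos_pos_of_mem_Ioo hv
    have hcc : (Real.cos v : ℂ) ≠ 0 := by exact_mod_cast hc.ne'
    have hCinv : (Real.cos v : ℂ) * (Real.cos v : ℂ)⁻¹ = 1 := mul_inv_cancel₀ hcc
    have hd1 : deriv ξ v = g v := (hξdiff v hv).deriv
    have heq : deriv ξ =ᶠ[nhds v] g := by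
      filter_upwards [isOpen_Ioo.mem_nhds hv] with w hw
      exact (hξdiff w hw).deriv
    have hd2 : deriv (deriv ξ) v = _ := heq.deriv_eq.trans (hgdiff v hv).deriv
    rw [hd1, hd2, hξ]
    have hsc : (Real.sin v : ℂ)^2 + (Real.cos v : ℂ)^2 = 1 := by
      exact_mod_cast congrArg (Complex.ofReal ·) (Real.sin_sq_add_cos_sq v)
    have hkey : a^2 + lam = 1 := by rw [ha, hlam]; ring
    simp only [hg, hu]
    set C := (Real.cos v : ℂ)
    set S := (Real.sin v : ℂ)
    set ch := Complex.cosh (a * (Real.arsinh (Real.tan v) : ℂ))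
    set sh := Complex.sinh (a * (Real.arsinh (Real.tan v) : ℂ))
    linear_combination (C * a^2 * ch - C * S * a * sh) * hCinv - (C * ch) * hsc
      + (C * ch) * hkey
  · rw [hξ]; simp
  · have h0 : (0:ℝ) ∈ Ioo (-(π/2)) (π/2) := by
      constructor <;> simp [Real.pi_pos]
    rw [(hξdiff 0 h0).deriv, hg]
    simp [hu]
end

section
/- For θ ∈ (0, π/2), define h(θ) = (1/(8 tan²θ))·(tan θ sec θ (2 sec²θ − 3) + (1 + 4 tan²θ)·log((1 + tan(θ/2))/(1 − tan(θ/2)))). Then lim_{θ→0⁺} h(θ)/tan θ = 2/3. -/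
open Real Filter

noncomputable def Gfun (u : ℝ) : ℝ :=
  (2*u*(1+u^2)*(-1+10*u^2-u^4)/(1-u^2)
    + (1+14*u^2+u^4)*(1-u^2)*(Real.log (1+u) - Real.log (1-u))) / (64*u^3)

lemma logE_bound {u : ℝ} (h0 : 0 < u) (h1 : u < 1/2) :
    |Real.log (1+u) - Real.log (1-u) - (2*u + 2/3*u^3)| ≤ 4*u^5 := by
  have hu1 : |u| < 1 := by rw [abs_of_pos h0]; linarith
  have hu2 : |(-u)| < 1 := by rw [abs_neg]; exact hu1
  have H1 := Real.abs_log_sub_add_sum_range_le hu1 4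
  have H2 := Real.abs_log_sub_add_sum_range_le hu2 4
  simp only [Finset.sum_range_succ, Finset.sum_range_zero] at H1 H2
  rw [abs_of_pos h0] at H1
  rw [abs_neg, abs_of_pos h0] at H2
  have h1u : (1:ℝ)/2 ≤ 1 - u := by linarith
  have hb : u^5/(1-u) ≤ 2*u^5 := by
    rw [div_le_iff₀ (by linarith)]
    nlinarith [pow_pos h0 5]
  have e1 : |(u + u^2/2 + u^3/3 + u^4/4) + Real.log (1-u)| ≤ 2*u^5 := by
    refine le_trans ?_ hb
    refine le_trans (le_of_eq ?_) H1
    congr 1; push_cast; ring_nf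
  have e2 : |(-u + u^2/2 - u^3/3 + u^4/4) + Real.log (1+u)| ≤ 2*u^5 := by
    refine le_trans ?_ hb
    have : (1:ℝ) - -u = 1 + u := by ring
    rw [this] at H2
    refine le_trans (le_of_eq ?_) H2
    congr 1; push_cast; ring_nf
  calc |Real.log (1+u) - Real.log (1-u) - (2*u + 2/3*u^3)|
      = |((-u + u^2/2 - u^3/3 + u^4/4) + Real.log (1+u))
          - ((u + u^2/2 + u^3/3 + u^4/4) + Real.log (1-u))| := by ring_nf
    _ ≤ |(-u + u^2/2 - u^3/3 + u^4/4) + Real.log (1+u)|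
          + |(u + u^2/2 + u^3/3 + u^4/4) + Real.log (1-u)| := abs_sub _ _
    _ ≤ 2*u^5 + 2*u^5 := add_le_add e2 e1
    _ = 4*u^5 := by ring

lemma G_tendsto : Tendsto Gfun (nhdsWithin 0 (Set.Ioi 0)) (nhds (2/3)) := by
  set R : ℝ → ℝ := fun u => (128/3 - 26*u^2 + 14/3*u^4 + 10*u^6 + 2/3*u^8) / (64*(1-u^2))
    with hRdef
  have hRlim : Tendsto R (nhdsWithin 0 (Set.Ioi 0)) (nhds (2/3)) := by
    have hc : ContinuousAt R 0 := by
      apply ContinuousAt.div (by fun_prop) (by fun_prop)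
      norm_num
    have h0 : R 0 = 2/3 := by norm_num [hRdef]
    exact h0 ▸ hc.continuousWithinAt.tendsto
  have hdiff : Tendsto (fun u => Gfun u - R u) (nhdsWithin 0 (Set.Ioi 0)) (nhds 0) := by
    apply squeeze_zero_norm' (a := fun u : ℝ => u^2)
    · filter_upwards [Ioo_mem_nhdsGT_of_mem (show (0:ℝ) ∈ Set.Ico 0 (1/2) by norm_num)]
        with u hu
      obtain ⟨h0, h1⟩ := hu
      have hu1 : u < 1 := by linarith
      have hone : (0:ℝ) < 1 - u^2 := by nlinarith
      have hu3 : (0:ℝ) < u^3 := by positivity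
      set E := Real.log (1+u) - Real.log (1-u) - (2*u + 2/3*u^3) with hE
      have hEb : |E| ≤ 4*u^5 := logE_bound h0 h1
      have hkey : Gfun u - R u = (1+14*u^2+u^4)*(1-u^2)*E/(64*u^3) := by
        simp only [Gfun, hRdef, hE]
        field_simp
        ring
      have hB0 : (0:ℝ) < (1+14*u^2+u^4)*(1-u^2) := by positivity
      have hB5 : (1+14*u^2+u^4)*(1-u^2) ≤ 5 := by nlinarith
      rw [hkey]
      rw [Real.norm_eq_abs, abs_div, abs_mul, abs_of_pos hB0,
        abs_of_pos (show (0:ℝ) < 64*u^3 by positivity)]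
      rw [div_le_iff₀ (by positivity)]
      have hm : (1+14*u^2+u^4)*(1-u^2) * |E| ≤ 5 * (4*u^5) :=
        mul_le_mul hB5 hEb (abs_nonneg E) (by norm_num)
      nlinarith [pow_pos h0 5]
    · have : Tendsto (fun u : ℝ => u^2) (nhds 0) (nhds 0) := by
        simpa using (continuous_pow 2).tendsto (0:ℝ)
      exact this.mono_left nhdsWithin_le_nhds
  have := hRlim.add hdiff
  simp only [add_zero] at this
  exact this.congr (fun u => by ring)

/-- With `h(θ) = (1/(8 tan²θ))(tan θ sec θ (2 sec²θ − 3)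
  + (1 + 4 tan²θ) log((1+tan(θ/2))/(1−tan(θ/2))))`, one has `h(θ)/tan θ → 2/3` as `θ → 0⁺`. -/
theorem stmt_13 (h : ℝ → ℝ)
    (hh : ∀ θ ∈ Set.Ioo 0 (π/2),
      h θ = (1 / (8 * tan θ ^ 2)) *
        (tan θ * (1 / cos θ) * (2 * (1 / cos θ) ^ 2 - 3)
          + (1 + 4 * tan θ ^ 2) * Real.log ((1 + tan (θ/2)) / (1 - tan (θ/2))))) :
    Tendsto (fun θ => h θ / tan θ) (nhdsWithin 0 (Set.Ioi 0)) (nhds (2/3)) := by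
  have hpi : (0:ℝ) < π/2 := by positivity
  have key : ∀ᶠ θ in nhdsWithin 0 (Set.Ioi 0),
      h θ / tan θ = Gfun (tan (θ/2)) := by
    filter_upwards [Ioo_mem_nhdsGT_of_mem (Set.left_mem_Ico.2 hpi)] with θ hθ
    obtain ⟨h0, h1⟩ := hθ
    have hhalf0 : 0 < θ/2 := by linarith
    have hhalf1 : θ/2 < π/4 := by linarith
    have hu0 : 0 < tan (θ/2) :=
      tan_pos_of_pos_of_lt_pi_div_two hhalf0 (by linarith [pi_pos])
    have hu1 : tan (θ/2) < 1 := by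
      have := tan_lt_tan_of_nonneg_of_lt_pi_div_two hhalf0.le
        (by linarith [pi_pos] : π/4 < π/2) hhalf1
      rwa [Real.tan_pi_div_four] at this
    set u := tan (θ/2) with hu
    have hcosθ : 0 < cos θ := Real.cos_pos_of_mem_Ioo ⟨by linarith [pi_pos], h1⟩
    have hc2 : 0 < cos (θ/2) := Real.cos_pos_of_mem_Ioo ⟨by linarith [pi_pos], by linarith [pi_pos]⟩
    have pyth : sin (θ/2)^2 + cos (θ/2)^2 = 1 := Real.sin_sq_add_cos_sq _
    have hsin : sin θ = 2 * sin (θ/2) * cos (θ/2) := by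
      have := Real.sin_two_mul (θ/2)
      rwa [show 2*(θ/2) = θ by ring] at this
    have hcosd : cos θ = cos (θ/2)^2 - sin (θ/2)^2 := by
      have := Real.cos_two_mul' (θ/2)
      rwa [show 2*(θ/2) = θ by ring] at this
    have hone : (0:ℝ) < 1 - u^2 := by nlinarith
    have hco : cos (θ/2)^2 - sin (θ/2)^2 ≠ 0 := by rw [← hcosd]; exact hcosθ.ne'
    have htan : tan θ = 2*u/(1-u^2) := by
      rw [Real.tan_eq_sin_div_cos, hsin, hcosd, hu, Real.tan_eq_sin_div_cos]
      rw [div_eq_div_iff hco (by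
        intro hz
        apply hco
        field_simp at hz
        nlinarith [hz, sq_nonneg (cos (θ/2))] )]
      field_simp
    have hsec : 1/cos θ = (1+u^2)/(1-u^2) := by
      rw [hcosd, hu, Real.tan_eq_sin_div_cos]
      rw [div_eq_div_iff hco (by
        intro hz
        apply hco
        field_simp at hz
        nlinarith [hz, sq_nonneg (cos (θ/2))] )]
      field_simp
      linarith [pyth]
    have hlog : Real.log ((1+u)/(1-u)) = Real.log (1+u) - Real.log (1-u) :=
      Real.log_div (by positivity) (by nlinarith : (0:ℝ) < 1 - u).ne'
    have htanθ : 0 < tan θ := tan_pos_of_pos_of_lt_pi_div_two h0 h1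
    rw [hh θ ⟨h0, h1⟩, hlog, hsec, htan]
    simp only [Gfun]
    field_simp
    ring
  have hmap : Tendsto (fun θ => tan (θ/2)) (nhdsWithin 0 (Set.Ioi 0)) (nhdsWithin 0 (Set.Ioi 0)) := by
    apply tendsto_nhdsWithin_of_tendsto_nhds_of_eventually_within
    · have hc : ContinuousAt (fun θ : ℝ => tan (θ/2)) 0 := by
        apply ContinuousAt.comp (g := tan)
        · exact Real.continuousAt_tan.mpr (by norm_num)
        · fun_prop
      have h0 : Tendsto (fun θ : ℝ => tan (θ/2)) (nhds 0) (nhds 0) := by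
        simpa using hc.tendsto
      exact h0.mono_left nhdsWithin_le_nhds
    · filter_upwards [Ioo_mem_nhdsGT_of_mem (Set.left_mem_Ico.2 hpi)] with θ hθ
      exact tan_pos_of_pos_of_lt_pi_div_two (by linarith [hθ.1]) (by linarith [hθ.2, pi_pos])
  exact (G_tendsto.comp hmap).congr' (Filter.EventuallyEq.symm key)
end
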